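/- Let C : ℝ → ℝ³ be a C² curve parametrized by arclength with |C''(u)| ≤ K for all u. Then for all a < b and all s ∈ [a, b]: |(C(b) − C(a)) × C'(s)| ≤ (K/2)·(b − a)². -/

import Mathlib

noncomputable section

/-- Cross product on `ℝ³`. -/
def cross3 (v w : EuclideanSpace ℝ (Fin 3)) : EuclideanSpace ℝ (Fin 3) :=
  WithLp.toLp 2 ![v 1 * w 2 - v 2 * w 1, v 2 * w 0 - v 0 * w 2, v 0 * w 1 - v 1 * w 0]

abbrev E3 := EuclideanSpace ℝ (Fin 3)

lemma cross3_sub_left (x y w : E3) : cross3 (x - y) w = cross3 x w - cross3 y w := by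
  ext i
  fin_cases i <;>
    simp [cross3, PiLp.sub_apply] <;> ring

lemma cross3_add_left (x y w : E3) : cross3 (x + y) w = cross3 x w + cross3 y w := by
  ext i
  fin_cases i <;>
    simp [cross3, PiLp.add_apply] <;> ring

lemma cross3_self (w : E3) : cross3 w w = 0 := by
  ext i
  fin_cases i <;> simp [cross3, PiLp.zero_apply] <;> ring

lemma cross3_neg_neg (x w : E3) : cross3 (-x) (-w) = cross3 x w := by
  ext i
  fin_cases i <;> simp [cross3, PiLp.neg_apply] <;> ring

lemma norm_cross3_le (v w : E3) : ‖cross3 v w‖ ≤ ‖v‖ * ‖w‖ := by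
  have h2 : ‖cross3 v w‖ ^ 2 ≤ (‖v‖ * ‖w‖) ^ 2 := by
    have hc : ‖cross3 v w‖ ^ 2 = ∑ i, (cross3 v w i) ^ 2 := by
      rw [EuclideanSpace.norm_eq, Real.sq_sqrt (by positivity)]
      simp [Real.norm_eq_abs, sq_abs]
    have hv : ‖v‖ ^ 2 = ∑ i, (v i) ^ 2 := by
      rw [EuclideanSpace.norm_eq, Real.sq_sqrt (by positivity)]
      simp [Real.norm_eq_abs, sq_abs]
    have hw : ‖w‖ ^ 2 = ∑ i, (w i) ^ 2 := by
      rw [EuclideanSpace.norm_eq, Real.sq_sqrt (by positivity)]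
      simp [Real.norm_eq_abs, sq_abs]
    rw [mul_pow, hc, hv, hw, Fin.sum_univ_three, Fin.sum_univ_three, Fin.sum_univ_three]
    simp only [cross3, Matrix.cons_val_zero, Matrix.cons_val_one, Matrix.head_cons,
      Matrix.cons_val_two, Matrix.tail_cons, PiLp.toLp_apply]
    nlinarith [sq_nonneg (v 0 * w 0 + v 1 * w 1 + v 2 * w 2)]
  calc ‖cross3 v w‖ = Real.sqrt (‖cross3 v w‖ ^ 2) := (Real.sqrt_sq (norm_nonneg _)).symm
    _ ≤ Real.sqrt ((‖v‖ * ‖w‖) ^ 2) := Real.sqrt_le_sqrt h2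
    _ = ‖v‖ * ‖w‖ := Real.sqrt_sq (by positivity)

/-- cross3 with fixed second argument, as a continuous linear map. -/
def crossL (w : E3) : E3 →L[ℝ] E3 :=
  LinearMap.toContinuousLinearMap
    { toFun := fun v => cross3 v w
      map_add' := by
        intro x y
        ext i
        fin_cases i <;> simp [cross3, PiLp.add_apply] <;> ring
      map_smul' := by
        intro c x
        ext i
        fin_cases i <;> simp [cross3, PiLp.smul_apply, smul_eq_mul] <;> ring }

lemma crossL_apply (w v : E3) : crossL w v = cross3 v w := rfl

lemma key (C : ℝ → E3) (K : ℝ)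
    (hC : ContDiff ℝ 2 C)
    (hcurv : ∀ u : ℝ, ‖iteratedDeriv 2 C u‖ ≤ K)
    (hunit : ∀ u : ℝ, ‖deriv C u‖ = 1) :
    ∀ s t : ℝ, s ≤ t → ‖cross3 (C t - C s) (deriv C s)‖ ≤ K / 2 * (t - s) ^ 2 := by
  intro s t hst
  have hK0 : 0 ≤ K := le_trans (norm_nonneg _) (hcurv 0)
  have hCd : Differentiable ℝ C := hC.differentiable (by norm_num)
  have hC1 : ContDiff ℝ 1 (deriv C) := by
    have := (contDiff_succ_iff_deriv (n := 1)).mp (by exact_mod_cast hC)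
    exact this.2.2
  have hC1d : Differentiable ℝ (deriv C) := hC1.differentiable (by norm_num)
  have hd2 : ∀ u, deriv (deriv C) u = iteratedDeriv 2 C u := by
    intro u
    rw [show (2 : ℕ) = 1 + 1 from rfl, iteratedDeriv_succ, iteratedDeriv_one]
  -- Lipschitz bound for deriv C
  have hlip : ∀ u : ℝ, s ≤ u → ‖deriv C u - deriv C s‖ ≤ K * (u - s) := by
    intro u hu
    have := Convex.norm_image_sub_le_of_norm_deriv_le (𝕜 := ℝ) (f := deriv C) (s := Set.univ)
      (fun x _ => hC1d x) (fun x _ => by rw [hd2]; exact hcurv x) convex_univ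
      (Set.mem_univ s) (Set.mem_univ u)
    simpa [Real.norm_eq_abs, abs_of_nonneg (by linarith : (0:ℝ) ≤ u - s)] using this
  set w := deriv C s with hw
  set f : ℝ → E3 := fun u => crossL w (C u - C s) with hf
  have hfd : ∀ u : ℝ, HasDerivAt f (crossL w (deriv C u)) u := by
    intro u
    have h1 : HasDerivAt (fun u => C u - C s) (deriv C u) u :=
      ((hCd u).hasDerivAt).sub_const _
    exact (crossL w).hasFDerivAt.comp_hasDerivAt u h1
  have hbound : ∀ u ∈ Set.Ico s t, ‖crossL w (deriv C u)‖ ≤ K * (u - s) := by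
    intro u hu
    have : crossL w (deriv C u) = cross3 (deriv C u - w) w := by
      rw [crossL_apply, cross3_sub_left, cross3_self, sub_zero]
    rw [this]
    calc ‖cross3 (deriv C u - w) w‖ ≤ ‖deriv C u - w‖ * ‖w‖ := norm_cross3_le _ _
      _ = ‖deriv C u - deriv C s‖ := by rw [hw, hunit s, mul_one]
      _ ≤ K * (u - s) := hlip u hu.1
  have hB : ∀ u : ℝ, HasDerivAt (fun u => K / 2 * (u - s) ^ 2) (K * (u - s)) u := by
    intro u
    have h1 : HasDerivAt (fun u : ℝ => (u - s) ^ 2) (2 * (u - s) ^ 1 * 1) u :=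
      ((hasDerivAt_id u).sub_const s).pow 2
    have := h1.const_mul (K / 2)
    rw [show K * (u - s) = K / 2 * (2 * (u - s) ^ 1 * 1) by ring]
    exact this
  have hmain := image_norm_le_of_norm_deriv_right_le_deriv_boundary
    (f := f) (f' := fun u => crossL w (deriv C u)) (a := s) (b := t)
    (fun u _ => (hfd u).continuousAt.continuousWithinAt)
    (fun u _ => (hfd u).hasDerivWithinAt)
    (by simp [hf]) hB hbound (Set.right_mem_Icc.mpr hst)
  simpa [hf, crossL_apply] using hmain

/-- If `C : ℝ → ℝ³` is a `C²` unit-speed curve with curvature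
`|C''| ≤ K`, then for all `a < b` and all `s ∈ [a, b]`,
`|(C b − C a) × C'(s)| ≤ (K/2)·(b − a)²`. -/
theorem chord_cross_tangent_bound
    (C : ℝ → EuclideanSpace ℝ (Fin 3)) (K : ℝ)
    (hC : ContDiff ℝ 2 C)
    (hunit : ∀ u : ℝ, ‖deriv C u‖ = 1)
    (hcurv : ∀ u : ℝ, ‖iteratedDeriv 2 C u‖ ≤ K) :
    ∀ a b : ℝ, a < b → ∀ s ∈ Set.Icc a b,
      ‖cross3 (C b - C a) (deriv C s)‖ ≤ K / 2 * (b - a) ^ 2 := by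
  intro a b hab s hs
  obtain ⟨has, hsb⟩ := hs
  have hK0 : 0 ≤ K := le_trans (norm_nonneg _) (hcurv 0)
  -- reversed curve
  set D : ℝ → E3 := fun u => C (-u) with hD
  have hCd : Differentiable ℝ C := hC.differentiable (by norm_num)
  have hC1 : ContDiff ℝ 1 (deriv C) := by
    have := (contDiff_succ_iff_deriv (n := 1)).mp (by exact_mod_cast hC)
    exact this.2.2
  have hC1d : Differentiable ℝ (deriv C) := hC1.differentiable (by norm_num)
  have hDC : ContDiff ℝ 2 D := hC.comp (contDiff_neg)
  have hDder : ∀ u : ℝ, deriv D u = -(deriv C (-u)) := by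
    intro u
    have h : HasDerivAt D ((-1 : ℝ) • deriv C (-u)) u :=
      ((hCd (-u)).hasDerivAt).scomp u (hasDerivAt_neg u)
    simpa using h.deriv
  have hDunit : ∀ u : ℝ, ‖deriv D u‖ = 1 := by
    intro u; rw [hDder, norm_neg]; exact hunit (-u)
  have hDcurv : ∀ u : ℝ, ‖iteratedDeriv 2 D u‖ ≤ K := by
    intro u
    have h2 : iteratedDeriv 2 D u = deriv (deriv D) u := by
      rw [show (2 : ℕ) = 1 + 1 from rfl, iteratedDeriv_succ, iteratedDeriv_one]
    have hdd : HasDerivAt (deriv D) (deriv (deriv C) (-u)) u := by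
      have h : HasDerivAt (fun x => deriv C (-x)) ((-1 : ℝ) • deriv (deriv C) (-u)) u :=
        ((hC1d (-u)).hasDerivAt).scomp u (hasDerivAt_neg u)
      have h' := h.neg
      have he : (fun x => -(deriv C (-x))) = deriv D := by
        funext x; rw [hDder]
      rw [show (-fun x => deriv C (-x)) = deriv D from he] at h'
      simpa using h'
    rw [h2, hdd.deriv]
    have : deriv (deriv C) (-u) = iteratedDeriv 2 C (-u) := by
      rw [show (2 : ℕ) = 1 + 1 from rfl, iteratedDeriv_succ, iteratedDeriv_one]
    rw [this]; exact hcurv (-u)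
  -- right piece: [s, b]
  have hright := key C K hC hcurv hunit s b hsb
  -- left piece via reversed curve on [-s, -a]
  have hleft0 := key D K hDC hDcurv hDunit (-s) (-a) (by linarith)
  have hDs : D (-s) = C s := by simp [hD]
  have hDa : D (-a) = C a := by simp [hD]
  have hleft : ‖cross3 (C s - C a) (deriv C s)‖ ≤ K / 2 * (s - a) ^ 2 := by
    have hval : cross3 (D (-a) - D (-s)) (deriv D (-s))
        = cross3 (-(C s - C a)) (-(deriv C s)) := by
      rw [hDa, hDs, hDder]
      simp
    rw [hval, cross3_neg_neg] at hleft0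
    convert hleft0 using 2
    ring
  have hsplit : cross3 (C b - C a) (deriv C s)
      = cross3 (C b - C s) (deriv C s) + cross3 (C s - C a) (deriv C s) := by
    have h : C b - C a = (C b - C s) + (C s - C a) := by abel
    rw [h, cross3_add_left]
  calc ‖cross3 (C b - C a) (deriv C s)‖
      ≤ ‖cross3 (C b - C s) (deriv C s)‖ + ‖cross3 (C s - C a) (deriv C s)‖ := by
        rw [hsplit]; exact norm_add_le _ _
    _ ≤ K / 2 * (b - s) ^ 2 + K / 2 * (s - a) ^ 2 := add_le_add hright hleft
    _ ≤ K / 2 * (b - a) ^ 2 := by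
        nlinarith [mul_nonneg hK0 (mul_nonneg (sub_nonneg.mpr hsb) (sub_nonneg.mpr has))]

end
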